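/- arXiv:1905.01029 — 5 statements merged into one kernel-verified Lean document; each statement's English description precedes it below -/
import Mathlib

section
/- (Correctness of the query decomposition) Let S be a finite set of points in ℝ^d with |S| ≥ 2, written as a union S = K ∪ L. Let δ_K be the closest-pair distance of K (∞ if |K| ≤ 1), δ_L the closest-pair distance of L, and for each a ∈ L let ψ_a = dist(a, nearest point of S \ {a} within ‖·‖_∞-distance δ of a), where δ = min(δ_K, δ_L), with ψ_a = ∞ if no such point exists. Then the closest-pair distance of S equals min(δ_K, min_{a ∈ L} ψ_a). -/
open scoped ENNReal

/-- The closest-pair distance of a finite set: the minimum of `edist p q` over distinct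
`p, q ∈ T`, which is `∞` when `|T| ≤ 1`. -/
noncomputable def closestPairDist {α : Type*} [PseudoEMetricSpace α] (T : Finset α) : ℝ≥0∞ :=
  ⨅ p ∈ T, ⨅ q ∈ T, ⨅ _ : p ≠ q, edist p q

lemma closestPairDist_le {α : Type*} [PseudoEMetricSpace α] {T : Finset α} {p q : α}
    (hp : p ∈ T) (hq : q ∈ T) (hpq : p ≠ q) : closestPairDist T ≤ edist p q := by
  unfold closestPairDist
  refine le_trans (iInf₂_le p hp) (le_trans (iInf₂_le q hq) (iInf_le _ hpq))

lemma closestPairDist_mono {α : Type*} [PseudoEMetricSpace α] {T U : Finset α}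
    (h : T ⊆ U) : closestPairDist U ≤ closestPairDist T := by
  refine le_iInf₂ fun p hp => le_iInf₂ fun q hq => le_iInf fun hpq =>
    closestPairDist_le (h hp) (h hq) hpq

lemma edist_coord_le {d : ℕ} (x y : EuclideanSpace ℝ (Fin d)) (i : Fin d) :
    edist (x i) (y i) ≤ edist x y := by
  refine le_trans (edist_le_pi_edist (WithLp.equiv 2 _ x) (WithLp.equiv 2 _ y) i) ?_
  simpa using PiLp.lipschitzWith_ofLp 2 (fun _ : Fin d => ℝ) x y

/-- **Correctness of the query decomposition.** Let `S = K ∪ L` be a finite set of at least two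
points in `ℝ^d`, let `δ_K, δ_L` be the closest-pair distances of `K` and `L` and
`δ = min δ_K δ_L`. For `a ∈ L`, let `ψ_a` be the distance from `a` to the nearest point of
`S \ {a}` lying within `‖·‖_∞`-distance `δ` of `a` (`∞` if there is none). Then the
closest-pair distance of `S` equals `min δ_K (⨅ a ∈ L, ψ_a)`. -/
theorem closestPair_query_decomposition (d : ℕ)
    (S K L : Finset (EuclideanSpace ℝ (Fin d)))
    (hS : (S : Set (EuclideanSpace ℝ (Fin d)))
        = (K : Set (EuclideanSpace ℝ (Fin d))) ∪ (L : Set (EuclideanSpace ℝ (Fin d))))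
    (hcard : 2 ≤ S.card) :
    closestPairDist S =
      min (closestPairDist K)
        (⨅ a ∈ L, ⨅ b ∈ S, ⨅ _ : b ≠ a,
          ⨅ _ : ∀ i, edist (b i) (a i) ≤ min (closestPairDist K) (closestPairDist L),
            edist a b) := by
  have hKS : K ⊆ S := fun x hx => by
    have : (x : EuclideanSpace ℝ (Fin d)) ∈ (S : Set _) := by rw [hS]; exact Or.inl hx
    exact_mod_cast this
  have hLS : L ⊆ S := fun x hx => by
    have : (x : EuclideanSpace ℝ (Fin d)) ∈ (S : Set _) := by rw [hS]; exact Or.inr hx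
    exact_mod_cast this
  classical
  apply le_antisymm
  · refine le_min (closestPairDist_mono hKS) ?_
    refine le_iInf₂ fun a ha => le_iInf₂ fun b hb => le_iInf fun hba => le_iInf fun _ => ?_
    rw [edist_comm]
    exact closestPairDist_le hb (hLS ha) hba
  · -- find minimizing pair
    obtain ⟨x, hx, y, hy, hxy⟩ := Finset.one_lt_card.mp hcard
    have hne : ((S ×ˢ S).filter (fun pq => pq.1 ≠ pq.2)).Nonempty :=
      ⟨(x, y), by simp [hx, hy, hxy]⟩
    obtain ⟨⟨p, q⟩, hpq, hmin⟩ := Finset.exists_min_image _ (fun pq => edist pq.1 pq.2) hne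
    simp only [Finset.mem_filter, Finset.mem_product] at hpq
    obtain ⟨⟨hpS, hqS⟩, hpqne⟩ := hpq
    have heq : closestPairDist S = edist p q := by
      refine le_antisymm (closestPairDist_le hpS hqS hpqne) ?_
      refine le_iInf₂ fun u hu => le_iInf₂ fun v hv => le_iInf fun huv => ?_
      exact hmin (u, v) (by simp [hu, hv, huv])
    rw [heq]
    have hδK : closestPairDist S ≤ closestPairDist K := closestPairDist_mono hKS
    have hδL : closestPairDist S ≤ closestPairDist L := closestPairDist_mono hLS
    -- case: p ∈ K and q ∈ K
    by_cases hK : p ∈ K ∧ q ∈ K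
    · exact min_le_of_left_le (closestPairDist_le hK.1 hK.2 hpqne)
    · -- one of p, q is in L
      have key : ∃ a ∈ L, ∃ b ∈ S, b ≠ a ∧ edist a b = edist p q := by
        rcases (not_and_or.mp hK) with h | h
        · have : p ∈ L := by
            have : (p : EuclideanSpace ℝ (Fin d)) ∈ (S : Set _) := by exact_mod_cast hpS
            rw [hS] at this
            rcases this with h' | h'
            · exact absurd (by exact_mod_cast h') h
            · exact_mod_cast h'
          exact ⟨p, this, q, hqS, hpqne.symm, rfl⟩
        · have : q ∈ L := by
            have : (q : EuclideanSpace ℝ (Fin d)) ∈ (S : Set _) := by exact_mod_cast hqS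
            rw [hS] at this
            rcases this with h' | h'
            · exact absurd (by exact_mod_cast h') h
            · exact_mod_cast h'
          exact ⟨q, this, p, hpS, hpqne, edist_comm q p⟩
      obtain ⟨a, haL, b, hbS, hba, hab⟩ := key
      refine min_le_of_right_le ?_
      have hcond : ∀ i, edist (b i) (a i) ≤ min (closestPairDist K) (closestPairDist L) := by
        intro i
        refine le_trans (edist_coord_le b a i) ?_
        rw [edist_comm, hab, ← heq]
        exact le_min hδK hδL
      calc (⨅ a ∈ L, ⨅ b ∈ S, ⨅ _ : b ≠ a,
          ⨅ _ : ∀ i, edist (b i) (a i) ≤ min (closestPairDist K) (closestPairDist L),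
            edist a b) ≤ edist a b := by
              refine le_trans (iInf₂_le a haL) (le_trans (iInf₂_le b hbS)
                (le_trans (iInf_le _ hba) (iInf_le _ hcond)))
        _ = edist p q := hab
end

section
/- Consequently, in a d-dimensional range tree built on n points, the number of nodes whose canonical subset has size at least √n is O(√n · log^{d-1} n). -/
/-- A `d`-dimensional range tree on a multiset of points. A `1`-dimensional range tree is a
binary tree whose leaves are the points. A `(d+1)`-dimensional range tree is a binary tree
whose leaves are the points and in which every node additionally carries an associated
`d`-dimensional range tree (intended to be built on the node's canonical subset). -/
inductive RTree (α : Type*) : ℕ → Type _ where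
  | leaf1 : α → RTree α 1
  | node1 : RTree α 1 → RTree α 1 → RTree α 1
  | leafS {d : ℕ} : α → RTree α (d + 1) → RTree α (d + 2)
  | nodeS {d : ℕ} : RTree α (d + 2) → RTree α (d + 2) → RTree α (d + 1) → RTree α (d + 2)

namespace RTree

/-- The canonical multiset of points stored in (the primary tree of) a range tree. -/
def pts {α : Type*} : ∀ {d : ℕ}, RTree α d → Multiset α
  | _, .leaf1 a => {a}
  | _, .node1 l r => pts l + pts r
  | _, .leafS a _ => {a}
  | _, .nodeS l r _ => pts l + pts r

/-- Well-formedness: every associated lower-dimensional tree is built on exactly the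
canonical subset of its node, and every primary tree is balanced (the numbers of points
in the two children of a node differ by at most one). -/
def WF {α : Type*} : ∀ {d : ℕ}, RTree α d → Prop
  | _, .leaf1 _ => True
  | _, .node1 l r => WF l ∧ WF r ∧
      (pts l).card ≤ (pts r).card + 1 ∧ (pts r).card ≤ (pts l).card + 1
  | _, .leafS a t => WF t ∧ pts t = {a}
  | _, .nodeS l r t => WF l ∧ WF r ∧ WF t ∧ pts t = pts l + pts r ∧
      (pts l).card ≤ (pts r).card + 1 ∧ (pts r).card ≤ (pts l).card + 1

/-- The number of nodes (over all levels, including nodes of all associated trees) whose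
canonical subset has size at least `a`. -/
def heavyCount {α : Type*} (a : ℕ) : ∀ {d : ℕ}, RTree α d → ℕ
  | _, .leaf1 _ => if a ≤ 1 then 1 else 0
  | _, .node1 l r =>
      (if a ≤ (pts l).card + (pts r).card then 1 else 0) + heavyCount a l + heavyCount a r
  | _, .leafS _ t => (if a ≤ 1 then 1 else 0) + heavyCount a t
  | _, .nodeS l r t =>
      (if a ≤ (pts l).card + (pts r).card then 1 else 0)
        + heavyCount a l + heavyCount a r + heavyCount a t

end RTree

namespace RTree

variable {α : Type*}

lemma card_pos : ∀ {d : ℕ} (t : RTree α d), 1 ≤ t.pts.card := by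
  intro d t
  induction t with
  | leaf1 p => simp [pts]
  | node1 l r ihl ihr => simp [pts]; omega
  | leafS p T ihT => simp [pts]
  | nodeS l r T ihl ihr ihT => simp [pts]; omega

lemma heavyCount_eq_zero (a : ℕ) : ∀ {d : ℕ} (t : RTree α d), t.WF →
    t.pts.card < a → t.heavyCount a = 0 := by
  intro d t
  induction t with
  | leaf1 p =>
    intro _ h
    simp [pts] at h
    simp [heavyCount]; omega
  | node1 l r ihl ihr =>
    intro hw h
    obtain ⟨hwl, hwr, _, _⟩ := hw
    simp [pts] at h
    simp [heavyCount, ihl hwl (by omega), ihr hwr (by omega)]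
    omega
  | leafS p T ihT =>
    intro hw h
    obtain ⟨hwT, hpT⟩ := hw
    simp [pts] at h
    have hcT : T.pts.card < a := by rw [hpT]; simpa using h
    simp [heavyCount, ihT hwT hcT]
    omega
  | nodeS l r T ihl ihr ihT =>
    intro hw h
    obtain ⟨hwl, hwr, hwT, hpT, _, _⟩ := hw
    simp [pts] at h
    have hcT : T.pts.card < a := by rw [hpT]; simp [pts]; omega
    simp [heavyCount, ihl hwl (by omega), ihr hwr (by omega), ihT hwT hcT]
    omega

lemma keyA (d x : ℕ) :
    4*(d+1) * x^(d+1) + 4*d*(x+1)^d + 4 ≤ 4*(d+1) * (x+1)^(d+1) := by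
  have h1 : x^d ≤ (x+1)^d := Nat.pow_le_pow_left (by omega) d
  have h2 : 1 ≤ (x+1)^d := Nat.one_le_pow _ _ (by omega)
  have e : (x+1)^(d+1) = (x+1)^d * x + (x+1)^d := by ring
  have e2 : x^(d+1) = x^d * x := by ring
  rw [e, e2]
  nlinarith [Nat.mul_le_mul h1 (le_refl x)]

lemma clog_child {L m : ℕ} (hm : 2 ≤ m) (hL : 2 * L ≤ m + 1) :
    Nat.clog 2 L + 1 ≤ Nat.clog 2 m := by
  have h1 : Nat.clog 2 m = Nat.clog 2 ((m + 1) / 2) + 1 :=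
    Nat.clog_of_two_le one_lt_two hm
  have h2 : L ≤ (m + 1) / 2 := by omega
  have := Nat.clog_mono_right 2 h2
  omega

lemma main_bound (a : ℕ) (ha : 1 ≤ a) : ∀ {d : ℕ} (t : RTree α d), t.WF →
    a ≤ t.pts.card →
    a * t.heavyCount a + 2 * a ≤
      4 * t.pts.card + 4 * (d-1) * t.pts.card * (Nat.clog 2 t.pts.card + 1)^(d-1) := by
  intro d t
  induction t with
  | leaf1 p =>
    intro _ h
    simp [pts] at h ⊢
    have : a = 1 := by omega
    simp [heavyCount, this]
  | node1 l r ihl ihr =>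
    intro hw h
    obtain ⟨hwl, hwr, hb1, hb2⟩ := hw
    have hLpos := card_pos l
    have hRpos := card_pos r
    simp [pts] at h ⊢
    simp only [heavyCount, if_pos (by simpa [pts] using h)]
    have hdist : ∀ b c : ℕ, a * (1 + b + c) = a + a * b + a * c := fun b c => by ring
    rw [hdist]
    by_cases hL : a ≤ l.pts.card
    · have hl := ihl hwl hL
      simp at hl
      by_cases hR : a ≤ r.pts.card
      · have hr := ihr hwr hR
        simp at hr
        omega
      · have hr0 := heavyCount_eq_zero a r hwr (by omega)
        rw [hr0]
        omega
    · have hl0 := heavyCount_eq_zero a l hwl (by omega)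
      rw [hl0]
      by_cases hR : a ≤ r.pts.card
      · have hr := ihr hwr hR
        simp at hr
        omega
      · have hr0 := heavyCount_eq_zero a r hwr (by omega)
        rw [hr0]
        omega
  | @leafS d p T ihT =>
    intro hw h
    obtain ⟨hwT, hpT⟩ := hw
    simp [pts] at h ⊢
    have ha1 : a = 1 := by omega
    have hcT : T.pts.card = 1 := by rw [hpT]; simp
    have hT := ihT hwT (by omega)
    rw [hcT] at hT
    simp [Nat.clog_one_right] at hT
    simp [heavyCount, ha1, Nat.clog_one_right] at hT ⊢
    omega
  | @nodeS d l r T ihl ihr ihT =>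
    intro hw h
    obtain ⟨hwl, hwr, hwT, hpT, hb1, hb2⟩ := hw
    have hLpos := card_pos l
    have hRpos := card_pos r
    set L := l.pts.card with hLdef
    set R := r.pts.card with hRdef
    have hcard : (pts (l.nodeS r T)).card = L + R := by simp [pts]; rfl
    rw [hcard] at h ⊢
    have hcT : T.pts.card = L + R := by rw [hpT]; simp [pts]; rfl
    have hm2 : 2 ≤ L + R := by omega
    set x := Nat.clog 2 (L + R) with hxdef
    have hd1 : d + 2 - 1 = d + 1 := rfl
    have hd2 : d + 1 - 1 = d := rfl
    rw [hd1]
    -- bound for the associated tree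
    have hT := ihT hwT (by omega)
    rw [hcT, hd2] at hT
    -- key inequality times (L + R)
    have key := keyA d x
    have keym : (L+R) * (4*(d+1) * x^(d+1) + 4*d*(x+1)^d + 4)
        ≤ (L+R) * (4*(d+1) * (x+1)^(d+1)) := Nat.mul_le_mul le_rfl key
    have keym' : 4*(d+1) * ((L+R) * x^(d+1)) + 4*d*((L+R)*(x+1)^d) + 4*(L+R)
        ≤ 4*(d+1) * ((L+R) * (x+1)^(d+1)) := by
      calc 4*(d+1) * ((L+R) * x^(d+1)) + 4*d*((L+R)*(x+1)^d) + 4*(L+R)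
          = (L+R) * (4*(d+1) * x^(d+1) + 4*d*(x+1)^d + 4) := by ring
        _ ≤ (L+R) * (4*(d+1) * (x+1)^(d+1)) := keym
        _ = 4*(d+1) * ((L+R) * (x+1)^(d+1)) := by ring
    have hclogL : Nat.clog 2 L + 1 ≤ x := clog_child hm2 (by omega)
    have hclogR : Nat.clog 2 R + 1 ≤ x := clog_child hm2 (by omega)
    have hpowL : (Nat.clog 2 L + 1)^(d+1) ≤ x^(d+1) := Nat.pow_le_pow_left hclogL _
    have hpowR : (Nat.clog 2 R + 1)^(d+1) ≤ x^(d+1) := Nat.pow_le_pow_left hclogR _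
    simp only [heavyCount, if_pos (show a ≤ (pts l).card + (pts r).card by
      simp only [← hLdef, ← hRdef]; omega)]
    have hdist : ∀ b c e : ℕ, a * (1 + b + c + e) = a + a * b + a * c + a * e :=
      fun b c e => by ring
    -- distribution equalities to keep everything linear in the product atoms
    have eA : (L+R) * x^(d+1) = L * x^(d+1) + R * x^(d+1) := by ring
    have hgoal : 4*(d+1)*(L+R)*(x+1)^(d+1) = 4*(d+1)*((L+R)*(x+1)^(d+1)) := by ring
    rw [hgoal]
    have hTlin : a * heavyCount a T + 2 * a
        ≤ 4 * (L+R) + 4*d*((L+R)*(x+1)^d) := by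
      calc a * heavyCount a T + 2 * a
          ≤ 4 * (L+R) + 4 * d * (L+R) * (x + 1)^d := hT
        _ = 4 * (L+R) + 4*d*((L+R)*(x+1)^d) := by ring
    by_cases hL : a ≤ L
    · have hl := ihl hwl hL
      rw [hd1] at hl
      have hl' : a * heavyCount a l + 2 * a ≤ 4 * L + 4*(d+1) * (L * x^(d+1)) := by
        calc a * heavyCount a l + 2 * a
            ≤ 4 * L + 4 * (d+1) * L * (Nat.clog 2 L + 1)^(d+1) := hl
          _ = 4 * L + 4*(d+1)*L * (Nat.clog 2 L + 1)^(d+1) := by ring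
          _ ≤ 4 * L + 4*(d+1)*L * x^(d+1) :=
              Nat.add_le_add_left (Nat.mul_le_mul (le_refl (4*(d+1)*L)) hpowL) _
          _ = 4 * L + 4*(d+1) * (L * x^(d+1)) := by ring
      by_cases hR : a ≤ R
      · have hr := ihr hwr hR
        rw [hd1] at hr
        have hr' : a * heavyCount a r + 2 * a ≤ 4 * R + 4*(d+1) * (R * x^(d+1)) := by
          calc a * heavyCount a r + 2 * a
              ≤ 4 * R + 4 * (d+1) * R * (Nat.clog 2 R + 1)^(d+1) := hr
            _ = 4 * R + 4*(d+1)*R * (Nat.clog 2 R + 1)^(d+1) := by ring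
            _ ≤ 4 * R + 4*(d+1)*R * x^(d+1) :=
                Nat.add_le_add_left (Nat.mul_le_mul (le_refl (4*(d+1)*R)) hpowR) _
            _ = 4 * R + 4*(d+1) * (R * x^(d+1)) := by ring
        rw [hdist]
        have eA' : 4*(d+1) * ((L+R) * x^(d+1))
            = 4*(d+1) * (L * x^(d+1)) + 4*(d+1) * (R * x^(d+1)) := by rw [eA]; ring
        linarith [hl', hr', hTlin, keym', eA'.ge, eA'.le]
      · have hr0 := heavyCount_eq_zero a r hwr (by omega)
        rw [hr0, hdist]
        have hLm : 4*(d+1) * (L * x^(d+1)) ≤ 4*(d+1) * ((L+R) * x^(d+1)) :=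
          Nat.mul_le_mul le_rfl (Nat.mul_le_mul (by omega) le_rfl)
        linarith [hl', hTlin, keym', hLm]
    · have hl0 := heavyCount_eq_zero a l hwl (by omega)
      rw [hl0]
      by_cases hR : a ≤ R
      · have hr := ihr hwr hR
        rw [hd1] at hr
        have hr' : a * heavyCount a r + 2 * a ≤ 4 * R + 4*(d+1) * (R * x^(d+1)) := by
          calc a * heavyCount a r + 2 * a
              ≤ 4 * R + 4 * (d+1) * R * (Nat.clog 2 R + 1)^(d+1) := hr
            _ = 4 * R + 4*(d+1)*R * (Nat.clog 2 R + 1)^(d+1) := by ring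
            _ ≤ 4 * R + 4*(d+1)*R * x^(d+1) :=
                Nat.add_le_add_left (Nat.mul_le_mul (le_refl (4*(d+1)*R)) hpowR) _
            _ = 4 * R + 4*(d+1) * (R * x^(d+1)) := by ring
        rw [hdist]
        have hRm : 4*(d+1) * (R * x^(d+1)) ≤ 4*(d+1) * ((L+R) * x^(d+1)) :=
          Nat.mul_le_mul le_rfl (Nat.mul_le_mul (by omega) le_rfl)
        linarith [hr', hTlin, keym', hRm]
      · have hr0 := heavyCount_eq_zero a r hwr (by omega)
        rw [hr0, hdist]
        have hz : 0 ≤ 4*(d+1) * ((L+R) * x^(d+1)) := Nat.zero_le _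
        linarith [hTlin, keym', hz]

end RTree

/-- In a `d`-dimensional range tree built on `n` points (for simplicity `n = 4^k`), the number
of nodes whose canonical subset has size at least `√n = 2^k` is `O(√n · log^(d-1) n)`. -/
theorem heavy_nodes_in_range_tree {α : Type*} :
    ∀ d : ℕ, 1 ≤ d → ∃ C : ℕ, ∀ (k : ℕ) (t : RTree α d), t.WF →
      (t.pts).card = 4 ^ k →
      t.heavyCount (2 ^ k) ≤ C * 2 ^ k * (k + 1) ^ (d - 1) := by
  intro d _
  refine ⟨4 + 4 * (d-1) * 2^(d-1), fun k t hwf hcard => ?_⟩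
  have ha : (1:ℕ) ≤ 2^k := Nat.one_le_two_pow
  have haN : 2^k ≤ t.pts.card := by
    rw [hcard]; exact Nat.pow_le_pow_left (by norm_num) k
  have h := RTree.main_bound (2^k) ha t hwf haN
  rw [hcard] at h
  have hclog : Nat.clog 2 (4^k) = 2*k := by
    have h4 : (4:ℕ)^k = 2^(2*k) := by rw [pow_mul]; norm_num
    rw [h4, Nat.clog_pow 2 (2*k) one_lt_two]
  rw [hclog] at h
  have h4 : (4:ℕ)^k = 2^k * 2^k := by
    rw [← Nat.mul_pow]
  have hpow : (2*k+1)^(d-1) ≤ 2^(d-1) * (k+1)^(d-1) := by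
    calc (2*k+1)^(d-1) ≤ (2*(k+1))^(d-1) := Nat.pow_le_pow_left (by omega) _
      _ = 2^(d-1) * (k+1)^(d-1) := Nat.mul_pow 2 (k+1) (d-1)
  have hone : 1 ≤ (k+1)^(d-1) := Nat.one_le_pow _ _ (by omega)
  refine Nat.le_of_mul_le_mul_left ?_ (show 0 < 2^k by positivity)
  calc 2^k * t.heavyCount (2^k)
      ≤ 4 * 4^k + 4 * (d-1) * 4^k * (2*k+1)^(d-1) := by omega
    _ ≤ 2^k * ((4 + 4 * (d-1) * 2^(d-1)) * 2^k * (k+1)^(d-1)) := by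
        rw [show 2^k * ((4 + 4 * (d-1) * 2^(d-1)) * 2^k * (k+1)^(d-1))
            = (4 + 4 * (d-1) * 2^(d-1)) * (2^k * 2^k) * (k+1)^(d-1) by ring, ← h4]
        nlinarith [Nat.mul_le_mul (le_refl (4 * (d-1) * 4^k)) hpow,
          Nat.mul_le_mul (le_refl (4 * 4^k)) hone]
end

section
/- (Decomposition in the halfspace query) Let S be a finite point set in ℝ^d, h a non-vertical hyperplane with lower halfspace H. Let Ξ be a convex polytope in dual space containing h*, with vertex set V, and set S_Ξ = {a ∈ S : a* is strictly below every point of Ξ} and L = ⋃_{v ∈ V} {a ∈ S : a ∈ H and a lies strictly above v*}. Then S ∩ H = S_Ξ ∪ L. -/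
open Finset

/-- **Decomposition in the halfspace query.** Let `S ⊆ ℝ^(n+1)` be finite, let `h` be the
non-vertical hyperplane `x_d = c₁x₁ + ⋯ + cₙxₙ + c_{n+1}` with lower (closed) halfspace `H`,
and let `Ξ = convexHull V` be a convex polytope in dual space containing the dual point
`h* = (c₁, …, cₙ, -c_{n+1})`. With
`S_Ξ = {a ∈ S : the dual hyperplane a* is strictly below every point of Ξ}` and
`L = ⋃_{v ∈ V} {a ∈ S : a ∈ H and a lies (weakly) above the primal hyperplane v*}`,
one has `S ∩ H = S_Ξ ∪ L`. -/
theorem halfspace_query_decomposition (n : ℕ)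
    (S V : Finset (Fin (n + 1) → ℝ)) (c : Fin (n + 1) → ℝ)
    (hmem : (Fin.snoc (fun i : Fin n => c i.castSucc) (-c (Fin.last n)) : Fin (n + 1) → ℝ)
      ∈ convexHull ℝ (V : Set (Fin (n + 1) → ℝ))) :
    {a | a ∈ S ∧
        a (Fin.last n) ≤ (∑ i : Fin n, c i.castSucc * a i.castSucc) + c (Fin.last n)}
      =
    {a | a ∈ S ∧ ∀ u ∈ convexHull ℝ (V : Set (Fin (n + 1) → ℝ)),
        u (Fin.last n) < (∑ i : Fin n, a i.castSucc * u i.castSucc) - a (Fin.last n)}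
      ∪
    {a | a ∈ S ∧
        (a (Fin.last n) ≤ (∑ i : Fin n, c i.castSucc * a i.castSucc) + c (Fin.last n)) ∧
        ∃ v ∈ V,
          (∑ i : Fin n, v i.castSucc * a i.castSucc) - v (Fin.last n) ≤ a (Fin.last n)} := by
  ext a
  simp only [Set.mem_setOf_eq, Set.mem_union]
  constructor
  · rintro ⟨hS, hH⟩
    by_cases hall : ∀ u ∈ convexHull ℝ (V : Set (Fin (n + 1) → ℝ)),
        u (Fin.last n) < (∑ i : Fin n, a i.castSucc * u i.castSucc) - a (Fin.last n)
    · exact Or.inl ⟨hS, hall⟩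
    · push_neg at hall
      obtain ⟨u, hu, hule⟩ := hall
      refine Or.inr ⟨hS, hH, ?_⟩
      by_contra hv
      push_neg at hv
      -- the set {x | a_last < ∑ aᵢ xᵢ - x_last} is a convex halfspace
      have hlin : IsLinearMap ℝ
          (fun x : Fin (n + 1) → ℝ =>
            (∑ i : Fin n, a i.castSucc * x i.castSucc) - x (Fin.last n)) := by
        constructor
        · intro x y
          simp [Pi.add_apply, mul_add, Finset.sum_add_distrib]
          ring
        · intro t x
          simp only [Pi.smul_apply, smul_eq_mul, Finset.mul_sum, mul_sub]
          congr 1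
          exact Finset.sum_congr rfl fun i _ => by ring
      have hconv : Convex ℝ {x : Fin (n + 1) → ℝ |
          a (Fin.last n) < (∑ i : Fin n, a i.castSucc * x i.castSucc) - x (Fin.last n)} :=
        convex_halfSpace_gt hlin _
      have hsub : convexHull ℝ (V : Set (Fin (n + 1) → ℝ)) ⊆ {x : Fin (n + 1) → ℝ |
          a (Fin.last n) < (∑ i : Fin n, a i.castSucc * x i.castSucc) - x (Fin.last n)} := by
        apply convexHull_min _ hconv
        intro v hvV
        have := hv v hvV
        have hsum : (∑ i : Fin n, v i.castSucc * a i.castSucc)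
            = ∑ i : Fin n, a i.castSucc * v i.castSucc := by
          exact Finset.sum_congr rfl fun i _ => mul_comm _ _
        simp only [Set.mem_setOf_eq]
        linarith [this, hsum ▸ this]
      have := hsub hu
      simp only [Set.mem_setOf_eq] at this
      linarith
  · rintro (⟨hS, hall⟩ | ⟨hS, hH, _⟩)
    · refine ⟨hS, ?_⟩
      have := hall _ hmem
      simp only [Fin.snoc_last, Fin.snoc_castSucc] at this
      have hsum : (∑ i : Fin n, a i.castSucc * c i.castSucc)
          = ∑ i : Fin n, c i.castSucc * a i.castSucc :=
        Finset.sum_congr rfl fun i _ => mul_comm _ _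
      rw [hsum] at this
      linarith
    · exact ⟨hS, hH⟩
end

section
/- (Correctness of the color-uniqueness-to-RCP reduction) Let S ⊆ ℝ² be a finite set of colored points with colors indexed by 1,…,k, and let D ≥ diam(S) be at least the maximum Euclidean distance between any two points of S (and D > 0). Map each point p = (p_x, p_y) with color i to p' = (p_x, p_y, 2·i·D) ∈ ℝ³, giving point set P. Then for any axis-parallel rectangle q ⊆ ℝ², the closest-pair distance of P ∩ (q × ℝ) is at most D if and only if some color has at least two points in S ∩ q. -/
open scoped ENNReal

lemma dist3_eq (u v : EuclideanSpace ℝ (Fin 3)) :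
    dist u v = Real.sqrt ((u 0 - v 0)^2 + (u 1 - v 1)^2 + (u 2 - v 2)^2) := by
  rw [EuclideanSpace.dist_eq]
  simp [Fin.sum_univ_three, Real.dist_eq, sq_abs]

lemma dist2_eq (u v : EuclideanSpace ℝ (Fin 2)) :
    dist u v = Real.sqrt ((u 0 - v 0)^2 + (u 1 - v 1)^2) := by
  rw [EuclideanSpace.dist_eq]
  simp [Fin.sum_univ_two, Real.dist_eq, sq_abs]

/-- **Correctness of the color-uniqueness-to-RCP reduction.** Let `S ⊆ ℝ²` be a finite set of
points colored by `col : ℝ² → {1, …, k}` (values ≥ 1), and `D > 0` at least the diameter of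
`S`. Map each `p = (p_x, p_y)` of color `i` to `p' = (p_x, p_y, 2·i·D) ∈ ℝ³`, giving the set
`P`. Then for any axis-parallel rectangle `q = [x₁,x₂] × [y₁,y₂]`, the closest-pair distance
of `P ∩ (q × ℝ)` is at most `D` iff some color has at least two points in `S ∩ q`. -/
theorem color_uniqueness_to_rcp_reduction
    [DecidableEq (EuclideanSpace ℝ (Fin 3))]
    (S : Finset (EuclideanSpace ℝ (Fin 2))) (col : EuclideanSpace ℝ (Fin 2) → ℕ)
    (k : ℕ) (hcol : ∀ p ∈ S, 1 ≤ col p ∧ col p ≤ k)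
    (D : ℝ) (hD : 0 < D) (hdiam : ∀ p ∈ S, ∀ q ∈ S, dist p q ≤ D)
    (x₁ x₂ y₁ y₂ : ℝ) :
    let lift : EuclideanSpace ℝ (Fin 2) → EuclideanSpace ℝ (Fin 3) :=
      fun p => WithLp.toLp 2 ![p 0, p 1, 2 * (col p : ℝ) * D]
    let inq : EuclideanSpace ℝ (Fin 2) → Prop :=
      fun p => x₁ ≤ p 0 ∧ p 0 ≤ x₂ ∧ y₁ ≤ p 1 ∧ p 1 ≤ y₂
    (closestPairDist ((S.filter fun p => inq p).image lift) ≤ ENNReal.ofReal D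
      ↔ ∃ p ∈ S, ∃ p' ∈ S, p ≠ p' ∧ col p = col p' ∧ inq p ∧ inq p') := by
  intro lift inq
  classical
  -- coordinates of the lift
  have hl0 : ∀ a, lift a 0 = a 0 := fun a => rfl
  have hl1 : ∀ a, lift a 1 = a 1 := fun a => rfl
  have hl2 : ∀ a, lift a 2 = 2 * (col a : ℝ) * D := fun a => rfl
  -- injectivity of lift
  have hinj : Function.Injective lift := by
    intro a b h
    ext i
    fin_cases i
    · have := congrArg (fun v => v 0) h; simpa [lift] using this
    · have := congrArg (fun v => v 1) h; simpa [lift] using this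
  -- distance between lifts
  have hdist : ∀ a b, dist (lift a) (lift b) =
      Real.sqrt ((a 0 - b 0)^2 + (a 1 - b 1)^2 + (2*(col a : ℝ)*D - 2*(col b : ℝ)*D)^2) := by
    intro a b
    rw [dist3_eq, hl0, hl0, hl1, hl1, hl2, hl2]
  constructor
  · -- forward: closest pair ≤ D implies same-color pair in rectangle
    intro h
    by_contra hno
    have hlb : ENNReal.ofReal (2 * D) ≤
        closestPairDist ((S.filter fun p => inq p).image lift) := by
      refine le_iInf fun p => le_iInf fun hp => le_iInf fun q => le_iInf fun hq =>
        le_iInf fun hne => ?_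
      rw [Finset.mem_image] at hp hq
      obtain ⟨a, ha, rfl⟩ := hp
      obtain ⟨b, hb, rfl⟩ := hq
      rw [Finset.mem_filter] at ha hb
      have hab : a ≠ b := fun e => hne (by rw [e])
      have hcne : col a ≠ col b := fun e =>
        hno ⟨a, ha.1, b, hb.1, hab, e, ha.2, hb.2⟩
      have h1 : (1 : ℝ) ≤ |(col a : ℝ) - (col b : ℝ)| := by
        have : ((col a : ℤ)) ≠ (col b : ℤ) := by exact_mod_cast hcne
        have h2 : (1 : ℤ) ≤ |(col a : ℤ) - (col b : ℤ)| :=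
          Int.one_le_abs (sub_ne_zero.mpr this)
        calc (1 : ℝ) ≤ |((col a : ℤ) - (col b : ℤ) : ℤ)| := by exact_mod_cast h2
          _ = |(col a : ℝ) - (col b : ℝ)| := by push_cast; ring_nf
      have hge : 2 * D ≤ dist (lift a) (lift b) := by
        rw [hdist]
        have habs : 2 * D ≤ |2*(col a : ℝ)*D - 2*(col b : ℝ)*D| := by
          have : |2*(col a : ℝ)*D - 2*(col b : ℝ)*D| = 2 * D * |(col a : ℝ) - (col b : ℝ)| := by
            rw [show 2*(col a : ℝ)*D - 2*(col b : ℝ)*D = 2 * D * ((col a : ℝ) - (col b : ℝ)) by ring,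
              abs_mul, abs_of_pos (by linarith : (0:ℝ) < 2 * D)]
          rw [this]
          nlinarith
        calc 2 * D ≤ |2*(col a : ℝ)*D - 2*(col b : ℝ)*D| := habs
          _ = Real.sqrt ((2*(col a : ℝ)*D - 2*(col b : ℝ)*D)^2) := (Real.sqrt_sq_eq_abs _).symm
          _ ≤ _ := by
            apply Real.sqrt_le_sqrt
            nlinarith [sq_nonneg (a 0 - b 0), sq_nonneg (a 1 - b 1)]
      rw [edist_dist]
      exact ENNReal.ofReal_le_ofReal hge
    have := le_trans hlb h
    rw [ENNReal.ofReal_le_ofReal_iff hD.le] at this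
    linarith
  · -- backward: same-color pair gives close pair
    rintro ⟨p, hp, p', hp', hne, hcc, hqp, hqp'⟩
    have hmem : lift p ∈ (S.filter fun r => inq r).image lift :=
      Finset.mem_image_of_mem _ (Finset.mem_filter.mpr ⟨hp, hqp⟩)
    have hmem' : lift p' ∈ (S.filter fun r => inq r).image lift :=
      Finset.mem_image_of_mem _ (Finset.mem_filter.mpr ⟨hp', hqp'⟩)
    have hlne : lift p ≠ lift p' := fun e => hne (hinj e)
    have hdle : dist (lift p) (lift p') ≤ D := by
      rw [hdist, hcc, sub_self]
      have : Real.sqrt ((p 0 - p' 0)^2 + (p 1 - p' 1)^2 + 0^2) = dist p p' := by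
        rw [dist2_eq]; norm_num
      rw [this]
      exact hdiam p hp p' hp'
    calc closestPairDist ((S.filter fun r => inq r).image lift)
        ≤ edist (lift p) (lift p') := by
          refine iInf_le_of_le (lift p) (iInf_le_of_le hmem
            (iInf_le_of_le (lift p') (iInf_le_of_le hmem' (iInf_le _ hlne))))
      _ ≤ ENNReal.ofReal D := by
          rw [edist_dist]
          exact ENNReal.ofReal_le_ofReal hdle
end

section
/- (Correctness of the set-intersection-to-color-uniqueness reduction, combinatorial core) Let S₁,…,S_m be finite sets of colors, and place for each i a cluster C_i of colored points in an ε-ball around (i, i) and a cluster C_i' around (m+i, i), where the points of C_i (resp. C_i') carry exactly the colors in S_i, with ε < 1/4. Then for indices j < i, the rectangle q = [i−ε, m+j+ε] × [j−ε, i+ε] contains exactly the points of C_i ∪ C_j', and therefore all colors among the points inside q are distinct if and only if S_i ∩ S_j = ∅. -/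
open Finset

lemma coord_abs_le_dist (p q : EuclideanSpace ℝ (Fin 2)) (k : Fin 2) :
    |p k - q k| ≤ dist p q := by
  rw [EuclideanSpace.dist_eq, ← Real.sqrt_sq_eq_abs]
  apply Real.sqrt_le_sqrt
  calc (p k - q k) ^ 2 = dist (p k) (q k) ^ 2 := by rw [Real.dist_eq, sq_abs]
    _ ≤ ∑ l, dist (p l) (q l) ^ 2 :=
      Finset.single_le_sum (f := fun l => dist (p l) (q l) ^ 2)
        (fun l _ => sq_nonneg _) (Finset.mem_univ k)

/-- **Correctness of the set-intersection-to-color-uniqueness reduction (combinatorial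
core).** Let `S₁, …, S_m` be finite sets of colors. For each `l ∈ {1,…,m}` place a cluster
`C l` of colored points inside the closed `ε`-ball around `(l, l)` and a cluster `C' l`
inside the closed `ε`-ball around `(m + l, l)`, where the colors occurring in `C l`
(resp. `C' l`) are exactly `S l` (with distinct points of a cluster having distinct colors),
and `0 < ε < 1/4`. Then for `1 ≤ j < i ≤ m`, the rectangle
`q = [i-ε, m+j+ε] × [j-ε, i+ε]` contains exactly the points of `C i ∪ C' j`, and all colors
of the points inside `q` are distinct iff `S i ∩ S j = ∅`. -/
theorem set_intersection_to_color_uniqueness {γ : Type*} [DecidableEq γ]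
    (m : ℕ) (Scol : ℕ → Finset γ)
    (C C' : ℕ → Finset (EuclideanSpace ℝ (Fin 2)))
    (col : EuclideanSpace ℝ (Fin 2) → γ)
    (ε : ℝ) (hε0 : 0 < ε) (hε : ε < 1 / 4)
    (hC : ∀ l ∈ Finset.Icc 1 m, ∀ p ∈ C l,
      dist p (WithLp.toLp 2 ![(l : ℝ), (l : ℝ)] : EuclideanSpace ℝ (Fin 2)) ≤ ε)
    (hC' : ∀ l ∈ Finset.Icc 1 m, ∀ p ∈ C' l,
      dist p (WithLp.toLp 2 ![(m : ℝ) + (l : ℝ), (l : ℝ)] : EuclideanSpace ℝ (Fin 2)) ≤ ε)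
    (hcolC : ∀ l ∈ Finset.Icc 1 m, (C l).image col = Scol l ∧ Set.InjOn col (C l))
    (hcolC' : ∀ l ∈ Finset.Icc 1 m, (C' l).image col = Scol l ∧ Set.InjOn col (C' l))
    (i j : ℕ) (hj : 1 ≤ j) (hji : j < i) (hi : i ≤ m) :
    let P : Set (EuclideanSpace ℝ (Fin 2)) :=
      (⋃ l ∈ Finset.Icc 1 m, (C l : Set (EuclideanSpace ℝ (Fin 2)))) ∪
        ⋃ l ∈ Finset.Icc 1 m, (C' l : Set (EuclideanSpace ℝ (Fin 2)))
    let inq : EuclideanSpace ℝ (Fin 2) → Prop := fun p =>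
      (i : ℝ) - ε ≤ p 0 ∧ p 0 ≤ (m : ℝ) + (j : ℝ) + ε ∧
        (j : ℝ) - ε ≤ p 1 ∧ p 1 ≤ (i : ℝ) + ε
    ({p ∈ P | inq p} = (C i : Set (EuclideanSpace ℝ (Fin 2))) ∪ (C' j : Set _)) ∧
      (Set.InjOn col {p ∈ P | inq p} ↔ Disjoint (Scol i) (Scol j)) := by
  intro P inq
  have hi' : i ∈ Finset.Icc 1 m := by simp only [Finset.mem_Icc]; omega
  have hj' : j ∈ Finset.Icc 1 m := by simp only [Finset.mem_Icc]; omega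
  -- coordinate bounds
  have hCcoord : ∀ l ∈ Finset.Icc 1 m, ∀ p ∈ C l,
      |p 0 - (l : ℝ)| ≤ ε ∧ |p 1 - (l : ℝ)| ≤ ε := by
    intro l hl p hp
    have h := hC l hl p hp
    refine ⟨?_, ?_⟩
    · have h0 := (coord_abs_le_dist p (WithLp.toLp 2 ![(l : ℝ), (l : ℝ)]) 0).trans h
      simpa using h0
    · have h1 := (coord_abs_le_dist p (WithLp.toLp 2 ![(l : ℝ), (l : ℝ)]) 1).trans h
      simpa using h1
  have hC'coord : ∀ l ∈ Finset.Icc 1 m, ∀ p ∈ C' l,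
      |p 0 - ((m : ℝ) + (l : ℝ))| ≤ ε ∧ |p 1 - (l : ℝ)| ≤ ε := by
    intro l hl p hp
    have h := hC' l hl p hp
    refine ⟨?_, ?_⟩
    · have h0 := (coord_abs_le_dist p (WithLp.toLp 2 ![(m : ℝ) + (l : ℝ), (l : ℝ)]) 0).trans h
      simpa using h0
    · have h1 := (coord_abs_le_dist p (WithLp.toLp 2 ![(m : ℝ) + (l : ℝ), (l : ℝ)]) 1).trans h
      simpa using h1
  have cj : (1 : ℝ) ≤ j := by exact_mod_cast hj
  have cji : (j : ℝ) < i := by exact_mod_cast hji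
  have cim : (i : ℝ) ≤ m := by exact_mod_cast hi
  -- spatial disjointness of C i and C' j
  have hdisjCC' : ∀ p : EuclideanSpace ℝ (Fin 2), p ∈ C i → p ∈ C' j → False := by
    intro p hpi hpj
    have h1 := (abs_le.mp (hCcoord i hi' p hpi).1)
    have h2 := (abs_le.mp (hC'coord j hj' p hpj).1)
    linarith
  have key : {p ∈ P | inq p} = (C i : Set (EuclideanSpace ℝ (Fin 2))) ∪ (C' j : Set _) := by
    ext p
    simp only [Set.mem_setOf_eq, Set.mem_union, P, inq, Set.mem_iUnion, Finset.mem_coe,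
      exists_prop]
    constructor
    · rintro ⟨hp, h1, h2, h3, h4⟩
      rcases hp with ⟨l, hl, hpl⟩ | ⟨l, hl, hpl⟩
      · left
        have hcast : (1 : ℝ) ≤ l ∧ (l : ℝ) ≤ m := by
          have := Finset.mem_Icc.mp hl; exact_mod_cast this
        obtain ⟨hb0, hb1⟩ := abs_le.mp (hCcoord l hl p hpl).1
        obtain ⟨hb2, hb3⟩ := abs_le.mp (hCcoord l hl p hpl).2
        have : l = i := by
          by_contra hne
          rcases lt_or_gt_of_ne hne with hlt | hgt
          · have : (l : ℝ) + 1 ≤ i := by exact_mod_cast hlt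
            linarith
          · have : (i : ℝ) + 1 ≤ l := by exact_mod_cast hgt
            linarith
        rwa [this] at hpl
      · right
        obtain ⟨hb0, hb1⟩ := abs_le.mp (hC'coord l hl p hpl).1
        obtain ⟨hb2, hb3⟩ := abs_le.mp (hC'coord l hl p hpl).2
        have : l = j := by
          by_contra hne
          rcases lt_or_gt_of_ne hne with hlt | hgt
          · have : (l : ℝ) + 1 ≤ j := by exact_mod_cast hlt
            linarith
          · have : (j : ℝ) + 1 ≤ l := by exact_mod_cast hgt
            linarith
        rwa [this] at hpl
    · rintro (hp | hp)
      · obtain ⟨hb0, hb1⟩ := abs_le.mp (hCcoord i hi' p hp).1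
        obtain ⟨hb2, hb3⟩ := abs_le.mp (hCcoord i hi' p hp).2
        exact ⟨Or.inl ⟨i, hi', hp⟩, by linarith, by linarith, by linarith, by linarith⟩
      · obtain ⟨hb0, hb1⟩ := abs_le.mp (hC'coord j hj' p hp).1
        obtain ⟨hb2, hb3⟩ := abs_le.mp (hC'coord j hj' p hp).2
        exact ⟨Or.inr ⟨j, hj', hp⟩, by linarith, by linarith, by linarith, by linarith⟩
  refine ⟨key, ?_⟩
  rw [key]
  obtain ⟨himgi, hinji⟩ := hcolC i hi'
  obtain ⟨himgj, hinjj⟩ := hcolC' j hj'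
  constructor
  · intro hinj
    rw [Finset.disjoint_left]
    intro c hci hcj
    rw [← himgi, Finset.mem_image] at hci
    rw [← himgj, Finset.mem_image] at hcj
    obtain ⟨p, hp, hpc⟩ := hci
    obtain ⟨p', hp', hpc'⟩ := hcj
    have : p = p' := hinj (Or.inl hp) (Or.inr hp') (by rw [hpc, hpc'])
    exact hdisjCC' p hp (this ▸ hp')
  · intro hdis p hp p' hp' hcol
    have hmemi : ∀ q ∈ C i, col q ∈ Scol i := fun q hq =>
      himgi ▸ Finset.mem_image_of_mem col hq
    have hmemj : ∀ q ∈ C' j, col q ∈ Scol j := fun q hq =>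
      himgj ▸ Finset.mem_image_of_mem col hq
    rcases hp with hp | hp <;> rcases hp' with hp' | hp'
    · exact hinji hp hp' hcol
    · exact absurd (hmemj p' hp') (Finset.disjoint_left.mp hdis (hcol ▸ hmemi p hp))
    · have h1 : col p' ∈ Scol i := hmemi p' hp'
      have h2 : col p' ∈ Scol j := hcol ▸ hmemj p hp
      exact (Finset.disjoint_left.mp hdis h1 h2).elim
    · exact hinjj hp hp' hcol
end
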